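/- Let A, B be real matrices with (A,B) stabilizable, let δ > 0 and let P be a symmetric positive definite matrix satisfying the Riccati inequality PA + AᵀP − 2δ P B Bᵀ P + I < 0. Then for any complex number λ with Re(λ) ≥ δ, the matrix A − λ B BᵀP is Hurwitz (all eigenvalues with negative real parts), with Lyapunov certificate P(A − λBBᵀP) + (A − λBBᵀP)*P ≤ −I < 0. -/

import Mathlib

open Matrix
open scoped ComplexOrder

private lemma mapC_mul {k l p : ℕ} (M : Matrix (Fin k) (Fin l) ℝ) (N : Matrix (Fin l) (Fin p) ℝ) :
    (M * N).map Complex.ofReal = M.map Complex.ofReal * N.map Complex.ofReal := by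
  ext i j; simp [Matrix.mul_apply]

private lemma mapC_ct {k l : ℕ} (M : Matrix (Fin k) (Fin l) ℝ) :
    (M.map Complex.ofReal)ᴴ = M.transpose.map Complex.ofReal := by
  ext i j; simp [Matrix.conjTranspose_apply]

open scoped MatrixOrder in
private lemma mapC_posDef {k : ℕ} {M : Matrix (Fin k) (Fin k) ℝ} (hM : M.PosDef) :
    (M.map Complex.ofReal).PosDef := by
  set L := CFC.sqrt M with hLdef
  have hLL : L * L = M := CFC.sqrt_mul_sqrt_self M hM.posSemidef.nonneg
  have hLh : Lᴴ = L := (CFC.sqrt_nonneg M).posSemidef.isHermitian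
  have hdet : L.det ≠ 0 := by
    intro h
    have : M.det = 0 := by rw [← hLL, Matrix.det_mul, h, mul_zero]
    exact (hM.det_pos.ne' this)
  have hkey : M.map Complex.ofReal = (L.map Complex.ofReal)ᴴ * (L.map Complex.ofReal) := by
    rw [mapC_ct, ← mapC_mul]
    have hLt : Lᵀ = L := by
      ext i j
      simpa [Matrix.conjTranspose_apply] using congrFun (congrFun hLh i) j
    rw [hLt, hLL]
  refine Matrix.PosDef.of_dotProduct_mulVec_pos ?_ ?_
  · rw [hkey]; exact (Matrix.posSemidef_conjTranspose_mul_self _).isHermitian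
  · intro x hx
    rw [hkey, ← Matrix.mulVec_mulVec, Matrix.dotProduct_mulVec, Matrix.vecMul_conjTranspose,
      star_star]
    have hLx : (L.map Complex.ofReal) *ᵥ x ≠ 0 := by
      intro h
      have hdc : (L.map Complex.ofReal).det ≠ 0 := by
        have heq : (L.map Complex.ofReal).det = (L.det : ℂ) := by
          rw [show L.map Complex.ofReal = Complex.ofRealHom.mapMatrix L from rfl,
            ← RingHom.map_det]
          rfl
        rw [heq]
        exact_mod_cast hdet
      exact absurd (Matrix.exists_mulVec_eq_zero_iff.mp ⟨x, hx, h⟩) hdc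
    exact Matrix.dotProduct_star_self_pos_iff.mpr hLx

private lemma smulC_posSemidef {k : ℕ} {M : Matrix (Fin k) (Fin k) ℂ} (hM : M.PosSemidef)
    {c : ℝ} (hc : 0 ≤ c) : ((c : ℂ) • M).PosSemidef := by
  refine Matrix.PosSemidef.of_dotProduct_mulVec_nonneg ?_ ?_
  · show ((c : ℂ) • M)ᴴ = (c : ℂ) • M
    rw [Matrix.conjTranspose_smul, hM.isHermitian.eq]
    simp
  · intro x
    rw [Matrix.smul_mulVec, dotProduct_smul]
    exact mul_nonneg (by exact_mod_cast hc) (hM.dotProduct_mulVec_nonneg x)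

private lemma exists_eigenvector {k : ℕ} {M : Matrix (Fin k) (Fin k) ℂ} {μ : ℂ}
    (h : μ ∈ spectrum ℂ M) : ∃ v : Fin k → ℂ, v ≠ 0 ∧ M *ᵥ v = μ • v := by
  rw [spectrum.mem_iff, Matrix.isUnit_iff_isUnit_det, isUnit_iff_ne_zero, not_not] at h
  obtain ⟨v, hv0, hv⟩ := Matrix.exists_mulVec_eq_zero_iff.mpr h
  refine ⟨v, hv0, ?_⟩
  rw [Matrix.sub_mulVec, Algebra.algebraMap_eq_smul_one, Matrix.smul_mulVec,
    Matrix.one_mulVec, sub_eq_zero] at hv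
  exact hv.symm

theorem riccati_gives_hurwitz {n m : ℕ}
    (A : Matrix (Fin n) (Fin n) ℝ) (B : Matrix (Fin n) (Fin m) ℝ)
    (hstab : ∃ F : Matrix (Fin m) (Fin n) ℝ,
      ∀ μ ∈ spectrum ℂ ((A + B * F).map Complex.ofReal), μ.re < 0)
    (δ : ℝ) (hδ : 0 < δ) (P : Matrix (Fin n) (Fin n) ℝ) (hP : P.PosDef)
    (hRic : (-(P * A + A.transpose * P - (2 * δ) • (P * B * B.transpose * P) + 1)).PosDef)
    (lam : ℂ) (hlam : δ ≤ lam.re) :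
    (∀ μ ∈ spectrum ℂ
        (A.map Complex.ofReal - lam • ((B * B.transpose * P).map Complex.ofReal)), μ.re < 0)
    ∧ (-((P.map Complex.ofReal) *
            (A.map Complex.ofReal - lam • ((B * B.transpose * P).map Complex.ofReal))
          + (A.map Complex.ofReal
              - lam • ((B * B.transpose * P).map Complex.ofReal)).conjTranspose *
            (P.map Complex.ofReal)
          + 1)).PosSemidef := by
  have hPt : P.transpose = P := by
    ext i j
    simpa [Matrix.conjTranspose_apply] using congrFun (congrFun hP.isHermitian i) j
  set Pc := P.map Complex.ofReal with hPcdef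
  set Kc := (B * B.transpose * P).map Complex.ofReal with hKcdef
  set Ac := A.map Complex.ofReal with hAcdef
  set M := Ac - lam • Kc with hMdef
  set Sc := (P * B * B.transpose * P).map Complex.ofReal with hScdef
  -- the key algebraic identity
  have hkey : -(Pc * M + Mᴴ * Pc + 1)
      = (-(P * A + A.transpose * P - (2 * δ) • (P * B * B.transpose * P) + 1)).map Complex.ofReal
        + ((2 * lam.re - 2 * δ : ℝ) : ℂ) • Sc := by
    have hctK : Kcᴴ = (P * (B * B.transpose)).map Complex.ofReal := by
      rw [hKcdef, mapC_ct]
      congr 1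
      rw [Matrix.transpose_mul, Matrix.transpose_mul, Matrix.transpose_transpose, hPt]
    have h1 : Pc * Kc = Sc := by
      rw [hPcdef, hKcdef, hScdef, ← mapC_mul]; congr 1; simp [Matrix.mul_assoc]
    have h2 : ((P * (B * B.transpose)).map Complex.ofReal) * Pc = Sc := by
      rw [hPcdef, hScdef, ← mapC_mul]; congr 1; simp [Matrix.mul_assoc]
    have hmapR : (-(P * A + A.transpose * P - (2 * δ) • (P * B * B.transpose * P) + 1)).map
          Complex.ofReal
        = -((P * A).map Complex.ofReal + (A.transpose * P).map Complex.ofReal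
            - ((2 * δ : ℝ) : ℂ) • Sc + 1) := by
      rw [hScdef]
      ext i j
      simp [Matrix.map_apply, Matrix.one_apply, apply_ite Complex.ofReal]
    have hconj : star lam = ((2 * lam.re : ℝ) : ℂ) - lam := by
      rw [eq_sub_iff_add_eq, add_comm]; exact Complex.add_conj lam
    rw [hMdef, Matrix.conjTranspose_sub, Matrix.conjTranspose_smul, hAcdef, mapC_ct, hctK,
      hconj, Matrix.mul_sub, mul_smul_comm, h1, Matrix.sub_mul, smul_mul_assoc, h2,
      hmapR, mapC_mul P A, mapC_mul A.transpose P, ← hPcdef, ← hAcdef]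
    push_cast
    module
  -- positive semidefiniteness of the Lyapunov certificate
  have hScPSD : Sc.PosSemidef := by
    have : Sc = ((B.transpose * P).map Complex.ofReal)ᴴ * ((B.transpose * P).map Complex.ofReal) := by
      rw [hScdef, mapC_ct, ← mapC_mul]
      congr 1
      simp [Matrix.transpose_mul, hPt, Matrix.mul_assoc]
    rw [this]
    exact Matrix.posSemidef_conjTranspose_mul_self _
  have hQ : (-(Pc * M + Mᴴ * Pc + 1)).PosSemidef := by
    rw [hkey]
    exact ((mapC_posDef hRic).posSemidef).add (smulC_posSemidef hScPSD (by nlinarith))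
  refine ⟨?_, hQ⟩
  intro μ hmem
  obtain ⟨v, hv0, hv⟩ := exists_eigenvector hmem
  have hq : 0 < ((star v) ⬝ᵥ (Pc *ᵥ v)).re := by
    have := (mapC_posDef hP).re_dotProduct_pos hv0
    simpa [RCLike.re_to_complex] using this
  have hc : 0 < ((star v) ⬝ᵥ v).re := by
    have := Matrix.dotProduct_star_self_pos_iff (v := v).mpr hv0
    rw [Complex.lt_def] at this
    simpa using this.1
  have ht : 0 ≤ (star v) ⬝ᵥ ((-(Pc * M + Mᴴ * Pc + 1)) *ᵥ v) := hQ.dotProduct_mulVec_nonneg v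
  have he : (star v) ⬝ᵥ ((-(Pc * M + Mᴴ * Pc + 1)) *ᵥ v)
      = -(((2 * μ.re : ℝ) : ℂ) * ((star v) ⬝ᵥ (Pc *ᵥ v)) + (star v) ⬝ᵥ v) := by
    rw [Matrix.neg_mulVec, Matrix.add_mulVec, Matrix.add_mulVec, Matrix.one_mulVec,
      ← Matrix.mulVec_mulVec, ← Matrix.mulVec_mulVec, hv, Matrix.mulVec_smul]
    rw [dotProduct_neg, dotProduct_add, dotProduct_add,
      dotProduct_smul]
    rw [Matrix.dotProduct_mulVec (star v) Mᴴ, ← Matrix.star_mulVec, hv, star_smul,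
      smul_dotProduct]
    have : μ • ((star v) ⬝ᵥ (Pc *ᵥ v)) + star μ • ((star v) ⬝ᵥ (Pc *ᵥ v))
        = ((2 * μ.re : ℝ) : ℂ) * ((star v) ⬝ᵥ (Pc *ᵥ v)) := by
      rw [smul_eq_mul, smul_eq_mul, ← add_mul]
      congr 1
      exact Complex.add_conj μ
    rw [← this]
  rw [he, Complex.le_def] at ht
  have ht1 := ht.1
  simp only [Complex.zero_re, Complex.neg_re, Complex.add_re, Complex.mul_re,
    Complex.ofReal_re, Complex.ofReal_im, zero_mul, sub_zero] at ht1
  nlinarith
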